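/- In a commutative semigroup (S,+), every piecewise syndetic subset A of S is a J-set: for every finite set F of sequences f : ℕ → S, there exist a ∈ S and a finite nonempty set H ⊆ ℕ such that for every f ∈ F, a + ∑_{t ∈ H} f(t) ∈ A. -/

import Mathlib

/-- Fold of addition along a list, starting from `a` (no identity needed). -/
def addChain {S : Type*} [Add S] : S → List S → S
  | a, [] => a
  | a, b :: l => addChain (a + b) l

/-- The sum `∑ t ∈ H, f t` in an additive commutative semigroup (junk value `f 0`
for `H = ∅`; we only use it for nonempty `H`). -/
def finSum {S : Type*} [AddCommSemigroup S] (f : ℕ → S) (H : Finset ℕ) : S :=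
  match H.sort (· ≤ ·) with
  | [] => f 0
  | a :: l => addChain (f a) (l.map f)

def AddThick {S : Type*} [AddCommSemigroup S] (A : Set S) : Prop :=
  ∀ E : Finset S, E.Nonempty → ∃ x : S, ∀ e ∈ E, e + x ∈ A

def AddPiecewiseSyndetic {S : Type*} [AddCommSemigroup S] (A : Set S) : Prop :=
  ∃ F : Finset S, F.Nonempty ∧ AddThick {s : S | ∃ t ∈ F, t + s ∈ A}

def AddJSet {S : Type*} [AddCommSemigroup S] (A : Set S) : Prop :=
  ∀ F : Finset (ℕ → S), F.Nonempty →
    ∃ a : S, ∃ H : Finset ℕ, H.Nonempty ∧ ∀ f ∈ F, a + finSum f H ∈ A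

section lemmas
variable {S : Type*} [AddCommSemigroup S]

lemma coe_addChain (a : S) (l : List S) :
    ((addChain a l : S) : WithZero S) = (a : WithZero S) + (l.map (↑· : S → WithZero S)).sum := by
  induction l generalizing a with
  | nil => simp [addChain]
  | cons b l ih => simp [addChain, ih (a + b), add_assoc]

lemma coe_finSum (f : ℕ → S) (H : Finset ℕ) (hH : H.Nonempty) :
    ((finSum f H : S) : WithZero S) = ∑ t ∈ H, (f t : WithZero S) := by
  have hs : ∑ t ∈ H, (f t : WithZero S)
      = ((H.sort (· ≤ ·)).map (fun t => (f t : WithZero S))).sum := by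
    rw [Finset.sum, ← Finset.sort_eq H (· ≤ ·), Multiset.map_coe, Multiset.sum_coe]
  rcases h : H.sort (· ≤ ·) with _ | ⟨a, l⟩
  · exfalso
    have := Finset.sort_eq H (· ≤ ·)
    rw [h] at this
    rw [← H.card_pos, Finset.card, ← this] at hH
    simp at hH
  · rw [hs, h]
    simp only [finSum, h, coe_addChain, List.map_map, List.map_cons, List.sum_cons]
    rfl

lemma sum_coe_exists {ι : Type*} (H : Finset ι) (hH : H.Nonempty) (g : ι → S) :
    ∃ s : S, ∑ i ∈ H, (g i : WithZero S) = (s : WithZero S) := by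
  induction H using Finset.cons_induction with
  | empty => exact absurd hH (by simp)
  | cons a t ha ih =>
    rcases t.eq_empty_or_nonempty with rfl | ht
    · exact ⟨g a, by simp⟩
    · obtain ⟨s, hs⟩ := ih ht
      exact ⟨g a + s, by rw [Finset.sum_cons, hs]; norm_cast⟩

lemma mid_coe_exists (u v : S) (m : WithZero S) :
    ∃ s : S, (u : WithZero S) + m + (v : WithZero S) = (s : WithZero S) := by
  induction m using WithZero.recZeroCoe with
  | zero => exact ⟨u + v, by rw [add_zero]; norm_cast⟩
  | coe s => exact ⟨u + s + v, by norm_cast⟩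

end lemmas

theorem piecewiseSyndetic_isJSet {S : Type*} [AddCommSemigroup S] (A : Set S)
    (hA : AddPiecewiseSyndetic A) : AddJSet A := by
  classical
  obtain ⟨G, hGne, hthick⟩ := hA
  intro F hFne
  let α := {f : ℕ → S // f ∈ F}
  let κ := {t : S // t ∈ G}
  haveI : Nonempty α := ⟨⟨hFne.choose, hFne.choose_spec⟩⟩
  haveI : Nonempty κ := ⟨⟨hGne.choose, hGne.choose_spec⟩⟩
  obtain ⟨ι, _ifin, hHJ⟩ := Combinatorics.Line.exists_mono_in_high_dimension α κ
  haveI : Nonempty ι := by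
    obtain ⟨l, -⟩ := hHJ fun _ => Classical.arbitrary κ
    obtain ⟨i, -⟩ := l.proper
    exact ⟨i⟩
  set n : ι → ℕ := fun i => ((Fintype.equivFin ι) i : ℕ) with hn
  have hninj : Function.Injective n := fun i j h =>
    (Fintype.equivFin ι).injective (Fin.val_injective h)
  have hdex : ∀ w : ι → α, ∃ s : S,
      ∑ i : ι, (((w i).1 (n i) : S) : WithZero S) = (s : WithZero S) :=
    fun w => sum_coe_exists Finset.univ Finset.univ_nonempty _
  choose d hd using hdex
  obtain ⟨x, hx⟩ := hthick (Finset.univ.image d) (Finset.univ_nonempty.image d)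
  have hxB : ∀ w : ι → α, ∃ t ∈ G, t + (d w + x) ∈ A := fun w =>
    hx (d w) (Finset.mem_image_of_mem d (Finset.mem_univ w))
  choose t ht htA using hxB
  obtain ⟨l, c, hc⟩ := hHJ fun w => (⟨t w, ht w⟩ : κ)
  set V : Finset ι := Finset.univ.filter (fun i => l.idxFun i = none) with hV
  have hVne : V.Nonempty := by
    obtain ⟨i, hi⟩ := l.proper; exact ⟨i, by simp [hV, hi]⟩
  set H : Finset ℕ := V.image n with hH
  have hHne : H.Nonempty := hVne.image n
  let j0 : α := Classical.arbitrary α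
  set m : WithZero S :=
    ∑ i ∈ Finset.univ.filter (fun i => ¬ l.idxFun i = none),
      ((((l.idxFun i).getD j0).1 (n i) : S) : WithZero S) with hm
  obtain ⟨a, ha⟩ := mid_coe_exists c.1 x m
  refine ⟨a, H, hHne, fun f hf => ?_⟩
  set j : α := ⟨f, hf⟩ with hj
  -- d (l j) splits into the variable part and the constant part
  have hsplit : ((d (l j) : S) : WithZero S) = ((finSum f H : S) : WithZero S) + m := by
    rw [← hd (l j), ← Finset.sum_filter_add_sum_filter_not Finset.univ
      (fun i => l.idxFun i = none)]
    congr 1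
    · rw [coe_finSum f H hHne, hH, Finset.sum_image (fun i _ k _ h => hninj h)]
      refine Finset.sum_congr rfl fun i hi => ?_
      have : l.idxFun i = none := (Finset.mem_filter.1 hi).2
      simp [Combinatorics.Line.coe_apply, this, hj]
    · refine Finset.sum_congr rfl fun i hi => ?_
      have : ¬ l.idxFun i = none := (Finset.mem_filter.1 hi).2
      cases h : l.idxFun i with
      | none => exact absurd h this
      | some b => simp [Combinatorics.Line.coe_apply, h]
  have hco : ((a + finSum f H : S) : WithZero S)
      = ((c.1 + (d (l j) + x) : S) : WithZero S) := by
    push_cast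
    rw [← ha, hsplit]
    abel
  have := WithZero.coe_inj.1 hco
  rw [this]
  have hcj : t (l j) = c.1 := congrArg Subtype.val (hc j)
  rw [← hcj]
  exact htA (l j)
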